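/- Let t and d be integers such that the polynomial x² − t·x + d is irreducible over ℚ, and let R = ℤ[α] = ℤ[X]/(X² − tX + d), with α the image of X. Consider: (i) the set of 2×2 integer matrices A satisfying A·A − t·A + d·I = 0, equipped with the equivalence A ∼ B iff there is a unit U of the ring of 2×2 integer matrices (an integer matrix of determinant ±1) with B = U·A·U⁻¹; and (ii) the set of nonzero ideals of R, equipped with the equivalence I ≈ J iff there exist nonzero elements a, b of R with (a)·I = (b)·J, where (a) denotes the principal ideal generated by a and the product is the product of ideals. Then there exists a bijection between the quotient of (i) by ∼ and the quotient of (ii) by ≈. -/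

import Mathlib

open Polynomial

/-- The order `ℤ[α] = ℤ[X]/(X² − tX + d)` of the quadratic field `ℚ(α)`. -/
def QuadOrder (t d : ℤ) : Type :=
  AdjoinRoot ((X : ℤ[X]) ^ 2 - C t * X + C d)

noncomputable instance (t d : ℤ) : CommRing (QuadOrder t d) :=
  inferInstanceAs (CommRing (AdjoinRoot _))

/-- Two 2×2 integer matrices are equivalent if they are conjugate by a unit of the
ring of 2×2 integer matrices (i.e. an integer matrix of determinant ±1). -/
def MatRel (A B : Matrix (Fin 2) (Fin 2) ℤ) : Prop :=
  ∃ U : (Matrix (Fin 2) (Fin 2) ℤ)ˣ,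
    B = (U : Matrix (Fin 2) (Fin 2) ℤ) * A * ((U⁻¹ : (Matrix (Fin 2) (Fin 2) ℤ)ˣ) :
          Matrix (Fin 2) (Fin 2) ℤ)

/-- Two nonzero ideals `I, J` of a commutative ring are equivalent if `(a)·I = (b)·J`
for some nonzero elements `a, b`. -/
def IdealRel {R : Type*} [CommRing R] (I J : Ideal R) : Prop :=
  ∃ a b : R, a ≠ 0 ∧ b ≠ 0 ∧ Ideal.span {a} * I = Ideal.span {b} * J


namespace LMD

noncomputable abbrev P (t d : ℤ) : ℤ[X] := (X : ℤ[X]) ^ 2 - C t * X + C d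

variable (t d : ℤ)

lemma P_eq : P t d = X ^ 2 + (-(C t) * X + C d) := by ring

lemma P_monic : (P t d).Monic := by
  rw [P_eq]
  apply monic_X_pow_add
  refine lt_of_le_of_lt ?_ (by norm_num : (1:WithBot ℕ) < 2)
  compute_degree

lemma P_natDegree : (P t d).natDegree = 2 := by rw [P_eq]; compute_degree!

lemma P_map : (P t d).map (Int.castRingHom ℚ) =
    (X : ℚ[X]) ^ 2 - C (t:ℚ) * X + C (d:ℚ) := by
  simp [P, Polynomial.map_add, Polynomial.map_sub, Polynomial.map_mul, Polynomial.map_pow]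

variable {t d}

lemma P_irred (hirr : Irreducible ((X : ℚ[X]) ^ 2 - C (t:ℚ) * X + C (d:ℚ))) :
    Irreducible (P t d) := by
  apply (P_monic t d).irreducible_of_irreducible_map (Int.castRingHom ℚ)
  rw [P_map]; exact hirr

lemma quad_isDomain (hirr : Irreducible ((X : ℚ[X]) ^ 2 - C (t:ℚ) * X + C (d:ℚ))) :
    IsDomain (QuadOrder t d) := by
  have hprime : Prime (P t d) :=
    (UniqueFactorizationMonoid.irreducible_iff_prime).mp (P_irred hirr)
  haveI : (Ideal.span {P t d}).IsPrime :=
    (Ideal.span_singleton_prime hprime.ne_zero).mpr hprime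
  exact inferInstanceAs (IsDomain (ℤ[X] ⧸ Ideal.span {P t d}))

lemma no_rat_root (hirr : Irreducible ((X : ℚ[X]) ^ 2 - C (t:ℚ) * X + C (d:ℚ)))
    (c : ℚ) : c ^ 2 - t * c + d ≠ 0 := by
  intro hc
  set p : ℚ[X] := X ^ 2 - C (t:ℚ) * X + C (d:ℚ) with hp
  have hpnd : p.natDegree = 2 := by
    rw [hp, ← P_map t d, (P_monic t d).natDegree_map, P_natDegree]
  have hroot : p.IsRoot c := by
    simp only [hp, IsRoot, eval_add, eval_sub, eval_pow, eval_mul, eval_X, eval_C]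
    linarith [hc]
  obtain ⟨q, hq⟩ := (dvd_iff_isRoot.mpr hroot)
  rcases hirr.isUnit_or_isUnit hq with h | h
  · exact (Polynomial.not_isUnit_X_sub_C c) h
  · have hq0 : q ≠ 0 := by
      rintro rfl
      rw [mul_zero] at hq
      rw [hq] at hpnd
      simp at hpnd
    have : p.natDegree = (X - C c).natDegree + q.natDegree :=
      hq ▸ natDegree_mul (X_sub_C_ne_zero c) hq0
    rw [hpnd, natDegree_X_sub_C, natDegree_eq_zero_of_isUnit h] at this
    norm_num at this

/-- Entry-wise consequences of `A² - tA + dI = 0`. -/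
lemma key_entries (hirr : Irreducible ((X : ℚ[X]) ^ 2 - C (t:ℚ) * X + C (d:ℚ)))
    {A : Matrix (Fin 2) (Fin 2) ℤ}
    (hA : A * A - t • A + d • (1 : Matrix (Fin 2) (Fin 2) ℤ) = 0) :
    A 1 0 ≠ 0 ∧ A 0 0 + A 1 1 = t ∧ A 0 0 * A 1 1 - A 0 1 * A 1 0 = d := by
  have h := fun i j => congrFun (congrFun hA i) j
  simp only [Matrix.sub_apply, Matrix.add_apply, Matrix.smul_apply, Matrix.mul_apply,
    Matrix.one_apply, smul_eq_mul, Matrix.zero_apply, Fin.sum_univ_two] at h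
  have h00 := h 0 0; have h01 := h 0 1; have h10 := h 1 0; have h11 := h 1 1
  simp only [if_pos rfl, one_ne_zero, if_true, if_false, mul_one, mul_zero,
    Fin.zero_eq_one_iff, Fin.one_eq_zero_iff, OfNat.ofNat_ne_one, ite_false, ite_true] at *
  have hA10 : A 1 0 ≠ 0 := by
    intro hz
    apply no_rat_root hirr (A 0 0 : ℚ)
    have hzz : A 0 0 ^ 2 - t * A 0 0 + d = 0 := by
      rw [hz] at h00; nlinarith [h00]
    exact_mod_cast hzz
  refine ⟨hA10, ?_, ?_⟩
  · have : A 1 0 * (A 0 0 + A 1 1 - t) = 0 := by linarith [h10]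
    rcases mul_eq_zero.mp this with h' | h'
    · exact absurd h' hA10
    · linarith
  · have htr : A 0 0 + A 1 1 = t := by
      have : A 1 0 * (A 0 0 + A 1 1 - t) = 0 := by linarith [h10]
      rcases mul_eq_zero.mp this with h' | h'
      · exact absurd h' hA10
      · linarith
    linear_combination A 0 0 * htr - h00

variable (t d)

noncomputable def qa : QuadOrder t d := AdjoinRoot.root (P t d)

lemma qa_sq : qa t d * qa t d = t * qa t d - d := by
  have h : AdjoinRoot.mk (P t d) (P t d) = 0 := AdjoinRoot.mk_self
  simp only [P, map_add, map_sub, map_mul, map_pow, AdjoinRoot.mk_X, AdjoinRoot.mk_C] at h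
  simp only [eq_intCast] at h
  have h' : qa t d ^ 2 - t * qa t d + d = 0 := h
  linear_combination h'

noncomputable def B : Module.Basis (Fin 2) ℤ (QuadOrder t d) :=
  (AdjoinRoot.powerBasis' (P_monic t d)).basis.reindex (finCongr (P_natDegree t d))

lemma B_apply (i : Fin 2) : B t d i = qa t d ^ (i : ℕ) := by
  rw [B]; erw [Module.Basis.reindex_apply, PowerBasis.basis_eq_pow]
  simp [qa, finCongr_symm, finCongr_apply, Fin.coe_cast]
  rfl

lemma lin {p q : ℤ} (h : (p : QuadOrder t d) + q * qa t d = 0) : p = 0 ∧ q = 0 := by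
  have hli := (B t d).linearIndependent
  have h2 := Fintype.linearIndependent_iff.mp hli ![p, q] ?_
  · exact ⟨h2 0, h2 1⟩
  · rw [Fin.sum_univ_two]
    simp only [Matrix.cons_val_zero, Matrix.cons_val_one, Matrix.head_cons, B_apply,
      Fin.val_zero, Fin.val_one, pow_zero, pow_one, zsmul_eq_mul, mul_one]
    exact h

lemma rep (r : QuadOrder t d) : ∃ p q : ℤ, r = p + q * qa t d := by
  refine ⟨(B t d).repr r 0, (B t d).repr r 1, ?_⟩
  have h := (B t d).sum_repr r
  rw [Fin.sum_univ_two] at h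
  simp only [B_apply, Fin.val_zero, Fin.val_one, pow_zero, pow_one, zsmul_eq_mul, mul_one] at h
  exact h.symm

/-- Eigenvector of `Aᵀ` for eigenvalue `α`, with entries in `ℤ[α]`. -/
noncomputable def vA (A : Matrix (Fin 2) (Fin 2) ℤ) : Fin 2 → QuadOrder t d :=
  ![((A 1 0 : ℤ) : QuadOrder t d), qa t d - (A 0 0 : ℤ)]

noncomputable def phi (A : Matrix (Fin 2) (Fin 2) ℤ) (x : Fin 2 → ℤ) : QuadOrder t d :=
  (x 0 : QuadOrder t d) * vA t d A 0 + (x 1 : QuadOrder t d) * vA t d A 1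

noncomputable def Fid (A : Matrix (Fin 2) (Fin 2) ℤ) : Ideal (QuadOrder t d) :=
  Ideal.span {vA t d A 0, vA t d A 1}

variable {t d}

lemma vA_zero (A : Matrix (Fin 2) (Fin 2) ℤ) : vA t d A 0 = ((A 1 0 : ℤ) : QuadOrder t d) := rfl
lemma vA_one (A : Matrix (Fin 2) (Fin 2) ℤ) : vA t d A 1 = qa t d - (A 0 0 : ℤ) := rfl

lemma vA_one_ne (A : Matrix (Fin 2) (Fin 2) ℤ) : vA t d A 1 ≠ 0 := by
  intro h
  rw [vA_one] at h
  have h' : ((-(A 0 0) : ℤ) : QuadOrder t d) + (1 : ℤ) * qa t d = 0 := by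
    push_cast; linear_combination h
  exact one_ne_zero ((lin t d h').2)

lemma Fid_ne_bot (A : Matrix (Fin 2) (Fin 2) ℤ) : Fid t d A ≠ ⊥ := by
  intro h
  have hm : vA t d A 1 ∈ Fid t d A := Ideal.subset_span (by simp)
  rw [h, Ideal.mem_bot] at hm
  exact vA_one_ne A hm

lemma phi_mem (A : Matrix (Fin 2) (Fin 2) ℤ) (x : Fin 2 → ℤ) : phi t d A x ∈ Fid t d A := by
  refine Ideal.add_mem _ ?_ ?_ <;>
    exact Ideal.mul_mem_left _ _ (Ideal.subset_span (by simp))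

section withA

variable (hirr : Irreducible ((X : ℚ[X]) ^ 2 - C (t:ℚ) * X + C (d:ℚ)))
  {A : Matrix (Fin 2) (Fin 2) ℤ}
  (hA : A * A - t • A + d • (1 : Matrix (Fin 2) (Fin 2) ℤ) = 0)

include hirr hA

lemma V1 (j : Fin 2) : qa t d * vA t d A j =
    (A 0 j : ℤ) * vA t d A 0 + (A 1 j : ℤ) * vA t d A 1 := by
  obtain ⟨h10, htr, hdet⟩ := key_entries hirr hA
  have htrR : ((A 0 0 : ℤ) : QuadOrder t d) + (A 1 1 : ℤ) = (t : ℤ) := by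
    exact_mod_cast congrArg (Int.cast : ℤ → QuadOrder t d) htr
  have hdetR : ((A 0 0 : ℤ) : QuadOrder t d) * (A 1 1 : ℤ) - (A 0 1 : ℤ) * (A 1 0 : ℤ)
      = (d : ℤ) := by
    exact_mod_cast congrArg (Int.cast : ℤ → QuadOrder t d) hdet
  fin_cases j <;> simp only [Fin.zero_eta, Fin.mk_one, vA_zero, vA_one]
  · ring
  · linear_combination qa_sq t d - qa t d * htrR + hdetR

lemma phi_mulVec (x : Fin 2 → ℤ) :
    phi t d A (A.mulVec x) = qa t d * phi t d A x := by
  have h0 := V1 hirr hA 0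
  have h1 := V1 hirr hA 1
  simp only [phi, Matrix.mulVec, dotProduct, Fin.sum_univ_two]
  push_cast
  linear_combination (-(x 0 : QuadOrder t d)) * h0 - (x 1 : QuadOrder t d) * h1

lemma phi_zero_iff (x : Fin 2 → ℤ) : phi t d A x = 0 → x = 0 := by
  intro h
  obtain ⟨h10, -, -⟩ := key_entries hirr hA
  have h' : ((x 0 * A 1 0 - x 1 * A 0 0 : ℤ) : QuadOrder t d) + (x 1 : ℤ) * qa t d = 0 := by
    push_cast
    simp only [phi, vA_zero, vA_one] at h
    linear_combination h
  obtain ⟨e1, e2⟩ := lin t d h'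
  have hx1 : x 1 = 0 := e2
  have hx0 : x 0 = 0 := by
    rw [hx1] at e1
    have : x 0 * A 1 0 = 0 := by linarith
    rcases mul_eq_zero.mp this with h'' | h''
    · exact h''
    · exact absurd h'' h10
  funext i; fin_cases i <;> simp [hx0, hx1]

lemma phi_inj {x y : Fin 2 → ℤ} (h : phi t d A x = phi t d A y) : x = y := by
  have hz : phi t d A (x - y) = 0 := by
    simp only [phi, Pi.sub_apply] at *
    push_cast
    linear_combination h
  have := phi_zero_iff hirr hA _ hz
  funext i
  have := congrFun this i
  simp only [Pi.sub_apply, Pi.zero_apply] at this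
  omega

lemma phi_surj {y : QuadOrder t d} (hy : y ∈ Fid t d A) : ∃ x, phi t d A x = y := by
  rw [Fid, Ideal.mem_span_pair] at hy
  obtain ⟨r0, r1, hr⟩ := hy
  obtain ⟨p0, q0, h0⟩ := rep t d r0
  obtain ⟨p1, q1, h1⟩ := rep t d r1
  refine ⟨![p0 + q0 * A 0 0 + q1 * A 0 1, q0 * A 1 0 + p1 + q1 * A 1 1], ?_⟩
  have hv0 := V1 hirr hA 0
  have hv1 := V1 hirr hA 1
  simp only [phi, Matrix.cons_val_zero, Matrix.cons_val_one, Matrix.head_cons]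
  push_cast
  rw [← hr, h0, h1]
  linear_combination (-(q0 : QuadOrder t d)) * hv0 - (q1 : QuadOrder t d) * hv1

end withA

lemma phi_add (A : Matrix (Fin 2) (Fin 2) ℤ) (x y : Fin 2 → ℤ) :
    phi t d A (x + y) = phi t d A x + phi t d A y := by
  simp only [phi, Pi.add_apply]; push_cast; ring

lemma phi_smul (A : Matrix (Fin 2) (Fin 2) ℤ) (m : ℤ) (x : Fin 2 → ℤ) :
    phi t d A (m • x) = m * phi t d A x := by
  simp only [phi, Pi.smul_apply, smul_eq_mul]; push_cast; ring

section withA2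

variable (hirr : Irreducible ((X : ℚ[X]) ^ 2 - C (t:ℚ) * X + C (d:ℚ)))
  {A : Matrix (Fin 2) (Fin 2) ℤ}
  (hA : A * A - t • A + d • (1 : Matrix (Fin 2) (Fin 2) ℤ) = 0)

/-- Given `r : ℤ[α]` and `u`, there is `u'` such that any additive, `A`-equivariant map
sends `u'` to `r * (value at u)`. -/
lemma chi_action (r : QuadOrder t d) (u : Fin 2 → ℤ) :
    ∃ u', ∀ ψ : (Fin 2 → ℤ) → QuadOrder t d,
      (∀ a b, ψ (a + b) = ψ a + ψ b) → (∀ (m : ℤ) a, ψ (m • a) = m * ψ a) →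
      (∀ a, ψ (A.mulVec a) = qa t d * ψ a) → ψ u' = r * ψ u := by
  obtain ⟨p, q, hr⟩ := rep t d r
  refine ⟨p • u + q • A.mulVec u, ?_⟩
  intro ψ ha hs hq
  rw [ha, hs, hs, hq, hr]; ring

include hirr hA

lemma chi_star (χ : (Fin 2 → ℤ) → QuadOrder t d)
    (hadd : ∀ a b, χ (a + b) = χ a + χ b)
    (hsmul : ∀ (m : ℤ) a, χ (m • a) = m * χ a)
    (hqa : ∀ a, χ (A.mulVec a) = qa t d * χ a)
    (u w : Fin 2 → ℤ) :
    phi t d A u * χ w = phi t d A w * χ u := by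
  obtain ⟨z, hz⟩ := chi_action (A := A) (phi t d A u) w
  obtain ⟨z', hz'⟩ := chi_action (A := A) (phi t d A w) u
  have h1 := hz (phi t d A) (phi_add A) (phi_smul A) (phi_mulVec hirr hA)
  have h2 := hz' (phi t d A) (phi_add A) (phi_smul A) (phi_mulVec hirr hA)
  have hzz : z = z' := phi_inj hirr hA (h1.trans (by rw [mul_comm]; exact h2.symm))
  have c1 := hz χ hadd hsmul hqa
  have c2 := hz' χ hadd hsmul hqa
  rw [hzz, c2] at c1
  exact c1.symm

lemma idealRel_of_chi (J : Ideal (QuadOrder t d))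
    (χ : (Fin 2 → ℤ) → QuadOrder t d)
    (hadd : ∀ a b, χ (a + b) = χ a + χ b)
    (hsmul : ∀ (m : ℤ) a, χ (m • a) = m * χ a)
    (hqa : ∀ a, χ (A.mulVec a) = qa t d * χ a)
    (hmem : ∀ u, χ u ∈ J)
    (hsur : ∀ y ∈ J, ∃ u, χ u = y)
    (hinj : ∀ u, χ u = 0 → u = 0) :
    IdealRel (Fid t d A) J := by
  set e1 : Fin 2 → ℤ := ![0, 1] with he1
  have hpe : phi t d A e1 = vA t d A 1 := by simp [phi, he1]
  have ha : phi t d A e1 ≠ 0 := by rw [hpe]; exact vA_one_ne A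
  have hb : χ e1 ≠ 0 := by
    intro h
    have := congrFun (hinj _ h) 1
    simp [he1] at this
  refine ⟨χ e1, phi t d A e1, hb, ha, ?_⟩
  ext x
  rw [Ideal.mem_span_singleton_mul, Ideal.mem_span_singleton_mul]
  constructor
  · rintro ⟨z, hzI, rfl⟩
    obtain ⟨u, rfl⟩ := phi_surj hirr hA hzI
    refine ⟨χ u, hmem u, ?_⟩
    rw [chi_star hirr hA χ hadd hsmul hqa e1 u, mul_comm]
  · rintro ⟨z, hzJ, rfl⟩
    obtain ⟨u, rfl⟩ := hsur z hzJ
    refine ⟨phi t d A u, phi_mem A u, ?_⟩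
    rw [chi_star hirr hA χ hadd hsmul hqa e1 u, mul_comm]

end withA2

lemma matRel_to_idealRel (hirr : Irreducible ((X : ℚ[X]) ^ 2 - C (t:ℚ) * X + C (d:ℚ)))
    {A B' : Matrix (Fin 2) (Fin 2) ℤ}
    (hA : A * A - t • A + d • (1 : Matrix (Fin 2) (Fin 2) ℤ) = 0)
    (hB : B' * B' - t • B' + d • (1 : Matrix (Fin 2) (Fin 2) ℤ) = 0)
    (U : (Matrix (Fin 2) (Fin 2) ℤ)ˣ)
    (hU : B' = (U : Matrix (Fin 2) (Fin 2) ℤ) * A * ((U⁻¹ : (Matrix (Fin 2) (Fin 2) ℤ)ˣ) :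
      Matrix (Fin 2) (Fin 2) ℤ)) :
    IdealRel (Fid t d A) (Fid t d B') := by
  have hUA : (U : Matrix (Fin 2) (Fin 2) ℤ) * A = B' * U := by
    rw [hU, mul_assoc, U.inv_mul, mul_one]
  apply idealRel_of_chi hirr hA (Fid t d B')
      (fun u => phi t d B' ((U : Matrix (Fin 2) (Fin 2) ℤ).mulVec u))
  · intro a b; rw [Matrix.mulVec_add, phi_add]
  · intro m a; rw [Matrix.mulVec_smul, phi_smul]
  · intro a
    rw [Matrix.mulVec_mulVec, hUA, ← Matrix.mulVec_mulVec, phi_mulVec hirr hB]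
  · intro u; exact phi_mem _ _
  · intro y hy
    obtain ⟨x, hx⟩ := phi_surj hirr hB hy
    refine ⟨((U⁻¹ : (Matrix (Fin 2) (Fin 2) ℤ)ˣ) : Matrix (Fin 2) (Fin 2) ℤ).mulVec x, ?_⟩
    rw [Matrix.mulVec_mulVec, U.mul_inv, Matrix.one_mulVec, hx]
  · intro u hu
    have h0 : (U : Matrix (Fin 2) (Fin 2) ℤ).mulVec u = 0 := by
      apply phi_zero_iff hirr hB _ hu
    have : ((U⁻¹ : (Matrix (Fin 2) (Fin 2) ℤ)ˣ) : Matrix (Fin 2) (Fin 2) ℤ).mulVec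
        ((U : Matrix (Fin 2) (Fin 2) ℤ).mulVec u) = u := by
      rw [Matrix.mulVec_mulVec, U.inv_mul, Matrix.one_mulVec]
    rw [h0, Matrix.mulVec_zero] at this
    exact this.symm

lemma pi_decomp (x : Fin 2 → ℤ) :
    x = x 0 • Pi.single (0 : Fin 2) (1 : ℤ) + x 1 • Pi.single 1 1 := by
  funext i
  fin_cases i <;> simp [Pi.single_apply]

lemma eq_of_mulVec {M N : Matrix (Fin 2) (Fin 2) ℤ}
    (h : ∀ x, M.mulVec x = N.mulVec x) : M = N := by
  ext i j
  have := congrFun (h (Pi.single j 1)) i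
  simpa [Matrix.mulVec_single] using this

lemma idealRel_to_matRel (hirr : Irreducible ((X : ℚ[X]) ^ 2 - C (t:ℚ) * X + C (d:ℚ)))
    {A B' : Matrix (Fin 2) (Fin 2) ℤ}
    (hA : A * A - t • A + d • (1 : Matrix (Fin 2) (Fin 2) ℤ) = 0)
    (hB : B' * B' - t • B' + d • (1 : Matrix (Fin 2) (Fin 2) ℤ) = 0)
    (h : IdealRel (Fid t d A) (Fid t d B')) : MatRel A B' := by
  haveI := quad_isDomain hirr
  obtain ⟨a, b, ha0, hb0, hspan⟩ := h
  -- forward choice function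
  have hex : ∀ x : Fin 2 → ℤ, ∃ u, b * phi t d B' u = a * phi t d A x := by
    intro x
    have hx : a * phi t d A x ∈ Ideal.span {b} * Fid t d B' := by
      rw [← hspan]
      exact Ideal.mem_span_singleton_mul.mpr ⟨phi t d A x, phi_mem A x, rfl⟩
    obtain ⟨z, hz, hbz⟩ := Ideal.mem_span_singleton_mul.mp hx
    obtain ⟨u, rfl⟩ := phi_surj hirr hB hz
    exact ⟨u, hbz⟩
  have hex' : ∀ y : Fin 2 → ℤ, ∃ u, a * phi t d A u = b * phi t d B' y := by
    intro y
    have hy : b * phi t d B' y ∈ Ideal.span {a} * Fid t d A := by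
      rw [hspan]
      exact Ideal.mem_span_singleton_mul.mpr ⟨phi t d B' y, phi_mem B' y, rfl⟩
    obtain ⟨z, hz, haz⟩ := Ideal.mem_span_singleton_mul.mp hy
    obtain ⟨u, rfl⟩ := phi_surj hirr hA hz
    exact ⟨u, haz⟩
  set θ : (Fin 2 → ℤ) → (Fin 2 → ℤ) := fun x => (hex x).choose with hθdef
  have hθ : ∀ x, b * phi t d B' (θ x) = a * phi t d A x := fun x => (hex x).choose_spec
  set θ' : (Fin 2 → ℤ) → (Fin 2 → ℤ) := fun y => (hex' y).choose with hθ'def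
  have hθ' : ∀ y, a * phi t d A (θ' y) = b * phi t d B' y := fun y => (hex' y).choose_spec
  have cancelB : ∀ {u u'}, b * phi t d B' u = b * phi t d B' u' → u = u' := by
    intro u u' huu
    exact phi_inj hirr hB (mul_left_cancel₀ hb0 huu)
  have cancelA : ∀ {u u'}, a * phi t d A u = a * phi t d A u' → u = u' := by
    intro u u' huu
    exact phi_inj hirr hA (mul_left_cancel₀ ha0 huu)
  have θlin : ∀ (m n : ℤ) (x y), θ (m • x + n • y) = m • θ x + n • θ y := by
    intro m n x y
    apply cancelB
    rw [hθ, phi_add, phi_smul, phi_smul, phi_add, phi_smul, phi_smul]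
    linear_combination (-(m : QuadOrder t d)) * hθ x - (n : QuadOrder t d) * hθ y
  have θ'θ : ∀ x, θ' (θ x) = x := by
    intro x
    apply cancelA
    rw [hθ' (θ x), hθ x]
  have θθ' : ∀ y, θ (θ' y) = y := by
    intro y
    apply cancelB
    rw [hθ (θ' y), hθ' y]
  have θequi : ∀ x, θ (A.mulVec x) = B'.mulVec (θ x) := by
    intro x
    apply cancelB
    rw [hθ, phi_mulVec hirr hA, phi_mulVec hirr hB]
    linear_combination (-(qa t d)) * hθ x
  set Uc : Matrix (Fin 2) (Fin 2) ℤ :=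
    Matrix.of (fun i j => θ (Pi.single j 1) i) with hUc
  set Wc : Matrix (Fin 2) (Fin 2) ℤ :=
    Matrix.of (fun i j => θ' (Pi.single j 1) i) with hWc
  have hUmv : ∀ x, Uc.mulVec x = θ x := by
    intro x
    conv_rhs => rw [pi_decomp x, θlin]
    funext i
    simp only [Matrix.mulVec, dotProduct, Fin.sum_univ_two, hUc, Matrix.of_apply,
      Pi.add_apply, Pi.smul_apply, smul_eq_mul]
    ring
  have θ'lin : ∀ (m n : ℤ) (x y), θ' (m • x + n • y) = m • θ' x + n • θ' y := by
    intro m n x y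
    apply cancelA
    rw [hθ', phi_add, phi_smul, phi_smul, phi_add, phi_smul, phi_smul]
    linear_combination (-(m : QuadOrder t d)) * hθ' x - (n : QuadOrder t d) * hθ' y
  have hWmv : ∀ x, Wc.mulVec x = θ' x := by
    intro x
    conv_rhs => rw [pi_decomp x, θ'lin]
    funext i
    simp only [Matrix.mulVec, dotProduct, Fin.sum_univ_two, hWc, Matrix.of_apply,
      Pi.add_apply, Pi.smul_apply, smul_eq_mul]
    ring
  have hUW : Uc * Wc = 1 := by
    apply eq_of_mulVec
    intro x
    rw [← Matrix.mulVec_mulVec, hWmv, hUmv, θθ', Matrix.one_mulVec]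
  have hWU : Wc * Uc = 1 := by
    apply eq_of_mulVec
    intro x
    rw [← Matrix.mulVec_mulVec, hUmv, hWmv, θ'θ, Matrix.one_mulVec]
  have hcom : Uc * A = B' * Uc := by
    apply eq_of_mulVec
    intro x
    rw [← Matrix.mulVec_mulVec, ← Matrix.mulVec_mulVec, hUmv, hUmv, θequi]
  refine ⟨⟨Uc, Wc, hUW, hWU⟩, ?_⟩
  show B' = Uc * A * Wc
  rw [hcom, mul_assoc, hUW, mul_one]
lemma exists_matrix_for_ideal
    (hirr : Irreducible ((X : ℚ[X]) ^ 2 - C (t:ℚ) * X + C (d:ℚ)))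
    (J : Ideal (QuadOrder t d)) (hJ : J ≠ ⊥) :
    ∃ A : Matrix (Fin 2) (Fin 2) ℤ,
      A * A - t • A + d • (1 : Matrix (Fin 2) (Fin 2) ℤ) = 0 ∧ IdealRel (Fid t d A) J := by
  haveI := quad_isDomain hirr
  obtain ⟨x0, hx0J, hx00⟩ := Submodule.ne_bot_iff J |>.mp hJ
  set N : Submodule ℤ (QuadOrder t d) := J.restrictScalars ℤ with hN
  obtain ⟨n, bn⟩ := Submodule.basisOfPid (B t d) N
  have hx0N : x0 ∈ N := hx0J
  have hx0qaN : x0 * qa t d ∈ N := J.mul_mem_right _ hx0J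
  have hpair : LinearIndependent ℤ (![(⟨x0, hx0N⟩ : N), ⟨x0 * qa t d, hx0qaN⟩]) := by
    rw [Fintype.linearIndependent_iff]
    intro g hg
    have hg' := congrArg (Subtype.val) hg
    rw [Fin.sum_univ_two] at hg'
    simp only [Matrix.cons_val_zero, Matrix.cons_val_one, Matrix.head_cons,
      Submodule.coe_add, SetLike.val_smul, zsmul_eq_mul, Submodule.coe_zero] at hg'
    have hz : x0 * ((g 0 : QuadOrder t d) + g 1 * qa t d) = 0 := by
      linear_combination hg'
    rcases mul_eq_zero.mp hz with h | h
    · exact absurd h hx00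
    · have hpq := lin t d h
      intro i; fin_cases i
      · exact hpq.1
      · exact hpq.2
  have h2n : 2 ≤ n := by
    simpa using bn.card_le_card_of_linearIndependent hpair
  have hn2 : n ≤ 2 := by
    have hli : LinearIndependent ℤ (fun i => (bn i : QuadOrder t d)) :=
      bn.linearIndependent.map' N.subtype (Submodule.ker_subtype N)
    simpa using (B t d).card_le_card_of_linearIndependent hli
  have hn : n = 2 := le_antisymm hn2 h2n
  subst hn
  set w : Fin 2 → QuadOrder t d := fun i => (bn i : QuadOrder t d) with hw
  have hwJ : ∀ i, w i ∈ J := fun i => (bn i).2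
  have hqaw : ∀ j : Fin 2, qa t d * w j ∈ N := fun j => J.mul_mem_left _ (hwJ j)
  set A : Matrix (Fin 2) (Fin 2) ℤ :=
    Matrix.of (fun i j => bn.repr ⟨qa t d * w j, hqaw j⟩ i) with hAdef
  have haction : ∀ j, qa t d * w j
      = (A 0 j : ℤ) * w 0 + (A 1 j : ℤ) * w 1 := by
    intro j
    have h := bn.sum_repr ⟨qa t d * w j, hqaw j⟩
    rw [Fin.sum_univ_two] at h
    have h' := congrArg Subtype.val h
    simp only [Submodule.coe_add, SetLike.val_smul, zsmul_eq_mul] at h'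
    exact h'.symm
  have hcoef : ∀ g : Fin 2 → ℤ,
      (g 0 : QuadOrder t d) * w 0 + g 1 * w 1 = 0 → ∀ i, g i = 0 := by
    intro g hg
    apply Fintype.linearIndependent_iff.mp bn.linearIndependent g
    rw [Fin.sum_univ_two]
    apply Subtype.val_injective
    simp only [Submodule.coe_add, SetLike.val_smul, zsmul_eq_mul, Submodule.coe_zero]
    exact hg
  have hqq := qa_sq t d
  have hArel : A * A - t • A + d • (1 : Matrix (Fin 2) (Fin 2) ℤ) = 0 := by
    have key : ∀ j i : Fin 2,
        (A * A - t • A + d • (1 : Matrix (Fin 2) (Fin 2) ℤ)) i j = 0 := by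
      intro j
      apply hcoef
      have e0 := haction 0
      have e1 := haction 1
      simp only [Matrix.sub_apply, Matrix.add_apply, Matrix.mul_apply, Matrix.smul_apply,
        Matrix.one_apply, smul_eq_mul, Fin.sum_univ_two]
      fin_cases j
      · simp only [Fin.zero_eta, Fin.isValue]
        norm_num
        linear_combination (w 0) * hqq + (((t:ℤ):QuadOrder t d) - qa t d) * e0
          - ((A 0 0 : ℤ) : QuadOrder t d) * e0 - ((A 1 0 : ℤ) : QuadOrder t d) * e1
      · simp only [Fin.mk_one, Fin.isValue]
        norm_num
        linear_combination (w 1) * hqq + (((t:ℤ):QuadOrder t d) - qa t d) * e1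
          - ((A 0 1 : ℤ) : QuadOrder t d) * e0 - ((A 1 1 : ℤ) : QuadOrder t d) * e1
    ext i j
    rw [key j i]
    rfl
  set χ : (Fin 2 → ℤ) → QuadOrder t d :=
    fun u => (u 0 : QuadOrder t d) * w 0 + u 1 * w 1 with hχ
  refine ⟨A, hArel, idealRel_of_chi hirr hArel J χ ?_ ?_ ?_ ?_ ?_ ?_⟩
  · intro x y; simp only [hχ, Pi.add_apply]; push_cast; ring
  · intro m x; simp only [hχ, Pi.smul_apply, smul_eq_mul]; push_cast; ring
  · intro u
    simp only [hχ, Matrix.mulVec, dotProduct, Fin.sum_univ_two]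
    push_cast
    linear_combination (-(u 0 : QuadOrder t d)) * haction 0 - (u 1 : QuadOrder t d) * haction 1
  · intro u; exact J.add_mem (J.mul_mem_left _ (hwJ 0)) (J.mul_mem_left _ (hwJ 1))
  · intro y hy
    have hyN : y ∈ N := hy
    have h := bn.sum_repr ⟨y, hyN⟩
    rw [Fin.sum_univ_two] at h
    have h' := congrArg Subtype.val h
    simp only [Submodule.coe_add, SetLike.val_smul, zsmul_eq_mul] at h'
    exact ⟨![bn.repr ⟨y, hyN⟩ 0, bn.repr ⟨y, hyN⟩ 1], by
      simp only [hχ, Matrix.cons_val_zero, Matrix.cons_val_one, Matrix.head_cons]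
      exact h'⟩
  · intro u hu
    have h := hcoef u hu
    funext i; exact h i
end LMD

/-- if `x² − tx + d` is irreducible over `ℚ`, there is a bijection
between the conjugacy classes (under units of `M₂(ℤ)`) of integer matrices `A` with
`A² − tA + dI = 0` and the classes of nonzero ideals of `ℤ[α] = ℤ[X]/(X² − tX + d)`.
The bijection between the quotients is expressed by a map `F` on representatives
which respects the two equivalences in both directions and is surjective up to
equivalence. -/
theorem matrix_classes_biject_ideal_classes (t d : ℤ)
    (hirr : Irreducible ((X : ℚ[X]) ^ 2 - C (t : ℚ) * X + C (d : ℚ))) :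
    ∃ F : {A : Matrix (Fin 2) (Fin 2) ℤ //
            A * A - t • A + d • (1 : Matrix (Fin 2) (Fin 2) ℤ) = 0} →
          {I : Ideal (QuadOrder t d) // I ≠ ⊥},
      (∀ A B, MatRel A.1 B.1 ↔ IdealRel (F A).1 (F B).1) ∧
      (∀ J : {I : Ideal (QuadOrder t d) // I ≠ ⊥}, ∃ A, IdealRel (F A).1 J.1) := by
  refine ⟨fun A => ⟨LMD.Fid t d A.1, LMD.Fid_ne_bot A.1⟩, ?_, ?_⟩
  · intro A B
    constructor
    · rintro ⟨U, hU⟩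
      exact LMD.matRel_to_idealRel hirr A.2 B.2 U hU
    · intro h
      exact LMD.idealRel_to_matRel hirr A.2 B.2 h
  · intro J
    obtain ⟨A, hA, hrel⟩ := LMD.exists_matrix_for_ideal hirr J.1 J.2
    exact ⟨⟨A, hA⟩, hrel⟩
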